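/- Let H ∈ (0,1/2], T > 0, and let φ : [0,T]² → ℝ be bounded and measurable. Then for all 0 ≤ u < v ≤ T and 0 ≤ s < t ≤ T, |∫_0^T ∫_0^T φ(η,ζ) ρ_{uv}(η) ρ_{st}(ζ) dη dζ| ≤ 4 (v − u)^{2H} (t − s)^{2H} · sup_{(η,ζ) ∈ [0,T]²} |φ(η,ζ)|. -/

import Mathlib

open MeasureTheory intervalIntegral Set Real

private lemma aux_measurable_sign : Measurable Real.sign := by
  have h : Real.sign = fun r : ℝ => if r < 0 then (-1 : ℝ) else if 0 < r then 1 else 0 := by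
    funext r; rfl
  rw [h]
  exact Measurable.ite measurableSet_Iio measurable_const
    (Measurable.ite measurableSet_Ioi measurable_const measurable_const)

private lemma aux_abs_sign_le_one (x : ℝ) : |Real.sign x| ≤ 1 := by
  rcases lt_trichotomy x 0 with h | h | h
  · rw [Real.sign_of_neg h]; norm_num
  · rw [h, Real.sign_zero]; norm_num
  · rw [Real.sign_of_pos h]; norm_num

private lemma aux_measurable_rpow_const (p : ℝ) : Measurable fun x : ℝ => x ^ p := by
  have h : (fun x : ℝ => x ^ p)
      = fun x => if x = 0 then (0 : ℝ) ^ p else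
          if 0 < x then Real.exp (Real.log x * p)
          else Real.exp (Real.log x * p) * Real.cos (p * Real.pi) := by
    funext x
    split_ifs with h1 h2
    · rw [h1]
    · exact Real.rpow_def_of_pos h2 p
    · have hx : x < 0 := lt_of_le_of_ne (not_lt.1 h2) h1
      rw [Real.rpow_def_of_neg hx p, mul_comm p Real.pi]
  rw [h]
  refine Measurable.ite (MeasurableSet.singleton 0) measurable_const ?_
  exact Measurable.ite measurableSet_Ioi
    ((Real.measurable_log.mul measurable_const).exp)
    (((Real.measurable_log.mul measurable_const).exp).mul measurable_const)

private lemma aux_ae_ne (a : ℝ) : ∀ᵐ x : ℝ ∂volume, x ≠ a := by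
  rw [MeasureTheory.ae_iff]
  simp only [not_not, Set.setOf_eq_eq_singleton]
  exact measure_singleton a

private lemma aux_II_abs_rpow {p : ℝ} (hp : -1 < p) (a b : ℝ) :
    IntervalIntegrable (fun x => |x| ^ p) volume a b := by
  have key : ∀ A : ℝ, IntervalIntegrable (fun x => |x| ^ p) volume 0 A := by
    intro A
    rcases le_total 0 A with h | h
    · apply (intervalIntegral.intervalIntegrable_rpow' hp (a := 0) (b := A)).congr_ae
      rw [Set.uIoc_of_le h]
      filter_upwards [ae_restrict_mem measurableSet_Ioc] with x hx
      rw [abs_of_pos hx.1]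
    · have h0 := (intervalIntegral.intervalIntegrable_rpow' hp (a := 0) (b := -A)).comp_sub_left 0
      simp only [zero_sub, sub_zero, neg_neg] at h0
      apply h0.congr_ae
      rw [Set.uIoc_comm, Set.uIoc_of_le h]
      filter_upwards [ae_restrict_mem measurableSet_Ioc] with x hx
      rw [abs_of_nonpos hx.2]
  exact (key a).symm.trans (key b)

private lemma aux_II_abs_rpow_sub {p : ℝ} (hp : -1 < p) (c a b : ℝ) :
    IntervalIntegrable (fun x => |c - x| ^ p) volume a b := by
  have h := (aux_II_abs_rpow hp (c - a) (c - b)).comp_sub_left c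
  simpa using h

private lemma aux_integ_left {p : ℝ} (hp : -1 < p) {a b c : ℝ} (hab : a ≤ b) (hbc : b ≤ c) :
    ∫ x in a..b, |c - x| ^ p = ((c - a) ^ (p + 1) - (c - b) ^ (p + 1)) / (p + 1) := by
  have h1 : (∫ x in a..b, |c - x| ^ p) = ∫ x in a..b, (c - x) ^ p := by
    apply intervalIntegral.integral_congr
    intro x hx
    rw [Set.uIcc_of_le hab] at hx
    show |c - x| ^ p = (c - x) ^ p
    rw [abs_of_nonneg (by linarith [hx.2] : (0 : ℝ) ≤ c - x)]
  rw [h1]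
  rw [intervalIntegral.integral_comp_sub_left (fun y : ℝ => y ^ p) c]
  rw [integral_rpow (Or.inl hp)]

private lemma aux_integ_right {p : ℝ} (hp : -1 < p) {a b c : ℝ} (hca : c ≤ a) (hab : a ≤ b) :
    ∫ x in a..b, |c - x| ^ p = ((b - c) ^ (p + 1) - (a - c) ^ (p + 1)) / (p + 1) := by
  have h1 : (∫ x in a..b, |c - x| ^ p) = ∫ x in a..b, (x - c) ^ p := by
    apply intervalIntegral.integral_congr
    intro x hx
    rw [Set.uIcc_of_le hab] at hx
    show |c - x| ^ p = (x - c) ^ p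
    rw [abs_of_nonpos (by linarith [hx.1] : c - x ≤ 0), neg_sub]
  rw [h1]
  rw [intervalIntegral.integral_comp_sub_right (fun y : ℝ => y ^ p) c]
  rw [integral_rpow (Or.inl hp)]

private lemma aux_f_measurable (H a b : ℝ) :
    Measurable fun η : ℝ => H * (Real.sign (b - η) * |b - η| ^ (2 * H - 1)
      - Real.sign (a - η) * |a - η| ^ (2 * H - 1)) := by
  have hb : Measurable fun η : ℝ => b - η := measurable_const.sub measurable_id
  have ha : Measurable fun η : ℝ => a - η := measurable_const.sub measurable_id
  exact measurable_const.mul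
    (((aux_measurable_sign.comp hb).mul
        ((aux_measurable_rpow_const (2 * H - 1)).comp hb.abs)).sub
      ((aux_measurable_sign.comp ha).mul
        ((aux_measurable_rpow_const (2 * H - 1)).comp ha.abs)))

private lemma aux_f_II {H : ℝ} (hH0 : 0 < H) (a b A B : ℝ) :
    IntervalIntegrable (fun η : ℝ => H * (Real.sign (b - η) * |b - η| ^ (2 * H - 1)
      - Real.sign (a - η) * |a - η| ^ (2 * H - 1))) volume A B := by
  have hp : (-1 : ℝ) < 2 * H - 1 := by linarith
  rw [intervalIntegrable_iff]
  refine Integrable.mono'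
    (g := fun η => H * (|b - η| ^ (2 * H - 1) + |a - η| ^ (2 * H - 1))) ?_ ?_ ?_
  · exact (((aux_II_abs_rpow_sub hp b A B).add (aux_II_abs_rpow_sub hp a A B)).const_mul H).def'
  · exact (aux_f_measurable H a b).aestronglyMeasurable
  · refine Filter.Eventually.of_forall fun η => ?_
    have k1 : |Real.sign (b - η) * |b - η| ^ (2 * H - 1)| ≤ |b - η| ^ (2 * H - 1) := by
      rw [abs_mul, abs_of_nonneg (Real.rpow_nonneg (abs_nonneg _) _)]
      exact mul_le_of_le_one_left (Real.rpow_nonneg (abs_nonneg _) _) (aux_abs_sign_le_one _)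
    have k2 : |Real.sign (a - η) * |a - η| ^ (2 * H - 1)| ≤ |a - η| ^ (2 * H - 1) := by
      rw [abs_mul, abs_of_nonneg (Real.rpow_nonneg (abs_nonneg _) _)]
      exact mul_le_of_le_one_left (Real.rpow_nonneg (abs_nonneg _) _) (aux_abs_sign_le_one _)
    have k3 := abs_sub (Real.sign (b - η) * |b - η| ^ (2 * H - 1))
      (Real.sign (a - η) * |a - η| ^ (2 * H - 1))
    rw [Real.norm_eq_abs, abs_mul, abs_of_pos hH0]
    exact mul_le_mul_of_nonneg_left (le_trans k3 (add_le_add k1 k2)) hH0.le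

/-- The key one-sided estimate: `∫_0^T |ρ_{ab}| ≤ 2 (b-a)^{2H}` for the explicit formula. -/
private lemma aux_key_bound {H : ℝ} (hH0 : 0 < H) (hH1 : H ≤ 1 / 2) {T a b : ℝ}
    (ha : 0 ≤ a) (hab : a < b) (hbT : b ≤ T) :
    (∫ η in (0 : ℝ)..T, |H * (Real.sign (b - η) * |b - η| ^ (2 * H - 1)
      - Real.sign (a - η) * |a - η| ^ (2 * H - 1))|) ≤ 2 * (b - a) ^ (2 * H) := by
  have hp : (-1 : ℝ) < 2 * H - 1 := by linarith
  have hp0 : 2 * H - 1 ≤ 0 := by linarith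
  have hp1 : 2 * H - 1 + 1 = 2 * H := by ring
  set f : ℝ → ℝ := fun η => H * (Real.sign (b - η) * |b - η| ^ (2 * H - 1)
    - Real.sign (a - η) * |a - η| ^ (2 * H - 1)) with hfdef
  have hIf : ∀ A B : ℝ, IntervalIntegrable (fun η => |f η|) volume A B :=
    fun A B => (aux_f_II hH0 a b A B).abs
  have hb0 : (0 : ℝ) ≤ b := le_trans ha hab.le
  have hz : (0 : ℝ) ^ (2 * H - 1 + 1) = 0 := by
    rw [hp1]; exact Real.zero_rpow (by positivity)
  have hz' : (0 : ℝ) ^ (2 * H) = 0 := Real.zero_rpow (by positivity)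
  -- split the integral
  have e1 : (∫ η in (0:ℝ)..a, |f η|) + (∫ η in a..b, |f η|) = ∫ η in (0:ℝ)..b, |f η| :=
    integral_add_adjacent_intervals (hIf 0 a) (hIf a b)
  have e2 : (∫ η in (0:ℝ)..b, |f η|) + (∫ η in b..T, |f η|) = ∫ η in (0:ℝ)..T, |f η| :=
    integral_add_adjacent_intervals (hIf 0 b) (hIf b T)
  -- pointwise values on the three pieces
  have hP1 : (∫ η in (0:ℝ)..a, |f η|)
      = ∫ η in (0:ℝ)..a, H * (|a - η| ^ (2 * H - 1) - |b - η| ^ (2 * H - 1)) := by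
    apply intervalIntegral.integral_congr_ae
    filter_upwards [aux_ae_ne a] with x hxa hx
    rw [Set.uIoc_of_le ha] at hx
    have hx1 : x < a := lt_of_le_of_ne hx.2 hxa
    have hax : 0 < a - x := by linarith
    have hbx : 0 < b - x := by linarith
    have hle : |b - x| ^ (2 * H - 1) ≤ |a - x| ^ (2 * H - 1) := by
      rw [abs_of_pos hbx, abs_of_pos hax]
      exact Real.rpow_le_rpow_of_nonpos hax (by linarith) hp0
    simp only [hfdef]
    rw [Real.sign_of_pos hbx, Real.sign_of_pos hax, one_mul, one_mul, abs_mul,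
      abs_of_pos hH0,
      abs_of_nonpos (by linarith : |b - x| ^ (2 * H - 1) - |a - x| ^ (2 * H - 1) ≤ 0), neg_sub]
  have hP2 : (∫ η in a..b, |f η|)
      = ∫ η in a..b, H * (|b - η| ^ (2 * H - 1) + |a - η| ^ (2 * H - 1)) := by
    apply intervalIntegral.integral_congr_ae
    filter_upwards [aux_ae_ne b] with x hxb hx
    rw [Set.uIoc_of_le hab.le] at hx
    have hx2 : x < b := lt_of_le_of_ne hx.2 hxb
    have hbx : 0 < b - x := by linarith
    have hax : a - x < 0 := by linarith [hx.1]
    simp only [hfdef]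
    rw [Real.sign_of_pos hbx, Real.sign_of_neg hax, one_mul, neg_one_mul, sub_neg_eq_add,
      abs_mul, abs_of_pos hH0, abs_of_nonneg
        (by positivity : (0:ℝ) ≤ |b - x| ^ (2 * H - 1) + |a - x| ^ (2 * H - 1))]
  have hP3 : (∫ η in b..T, |f η|)
      = ∫ η in b..T, H * (|b - η| ^ (2 * H - 1) - |a - η| ^ (2 * H - 1)) := by
    apply intervalIntegral.integral_congr_ae
    filter_upwards [aux_ae_ne b] with x hxb hx
    rw [Set.uIoc_of_le hbT] at hx
    have hx1 : b < x := hx.1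
    have hbx : b - x < 0 := by linarith
    have hax : a - x < 0 := by linarith
    have hle : |a - x| ^ (2 * H - 1) ≤ |b - x| ^ (2 * H - 1) := by
      rw [abs_of_neg hbx, abs_of_neg hax]
      exact Real.rpow_le_rpow_of_nonpos (by linarith) (by linarith) hp0
    simp only [hfdef]
    rw [Real.sign_of_neg hbx, Real.sign_of_neg hax, neg_one_mul, neg_one_mul,
      sub_neg_eq_add, abs_mul, abs_of_pos hH0, abs_of_nonpos
        (by linarith : -(|b - x| ^ (2 * H - 1)) + |a - x| ^ (2 * H - 1) ≤ 0)]
    ring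
  -- compute each piece
  have v1 : (∫ η in (0:ℝ)..a, |f η|)
      = H * ((a ^ (2*H) - (b ^ (2*H) - (b - a) ^ (2*H))) / (2*H)) := by
    rw [hP1, intervalIntegral.integral_const_mul,
      intervalIntegral.integral_sub (aux_II_abs_rpow_sub hp a 0 a)
        (aux_II_abs_rpow_sub hp b 0 a),
      aux_integ_left hp ha (le_refl a), aux_integ_left hp ha hab.le]
    simp only [sub_zero, sub_self, hp1, hz, hz']
    ring
  have v2 : (∫ η in a..b, |f η|)
      = H * (((b - a) ^ (2*H) + (b - a) ^ (2*H)) / (2*H)) := by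
    rw [hP2, intervalIntegral.integral_const_mul,
      intervalIntegral.integral_add (aux_II_abs_rpow_sub hp b a b)
        (aux_II_abs_rpow_sub hp a a b),
      aux_integ_left hp hab.le (le_refl b), aux_integ_right hp (le_refl a) hab.le]
    simp only [sub_self, sub_zero, hp1, hz, hz']
    ring
  have v3 : (∫ η in b..T, |f η|)
      = H * (((T - b) ^ (2*H) - ((T - a) ^ (2*H) - (b - a) ^ (2*H))) / (2*H)) := by
    rw [hP3, intervalIntegral.integral_const_mul,
      intervalIntegral.integral_sub (aux_II_abs_rpow_sub hp b b T)
        (aux_II_abs_rpow_sub hp a b T),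
      aux_integ_right hp (le_refl b) hbT, aux_integ_right hp hab.le hbT]
    simp only [sub_self, sub_zero, hp1, hz, hz']
    ring
  -- put everything together
  have hH' : (2 * H) ≠ 0 := by positivity
  have hgoal : (∫ η in (0:ℝ)..T, |f η|)
      = (a ^ (2*H) - (b ^ (2*H) - (b - a) ^ (2*H))) / 2
        + ((b - a) ^ (2*H) + (b - a) ^ (2*H)) / 2
        + ((T - b) ^ (2*H) - ((T - a) ^ (2*H) - (b - a) ^ (2*H))) / 2 := by
    rw [← e2, ← e1, v1, v2, v3]
    field_simp
  have hA : a ^ (2*H) ≤ b ^ (2*H) := Real.rpow_le_rpow ha hab.le (by positivity)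
  have hD : (T - b) ^ (2*H) ≤ (T - a) ^ (2*H) :=
    Real.rpow_le_rpow (by linarith) (by linarith) (by positivity)
  show (∫ η in (0:ℝ)..T, |f η|) ≤ 2 * (b - a) ^ (2 * H)
  rw [hgoal]
  linarith

/-- For `H ∈ (0,1/2]`, `T > 0`, a bounded measurable `φ : [0,T]² → ℝ`, `0 ≤ u < v ≤ T` and
`0 ≤ s < t ≤ T`,
`|∫_0^T ∫_0^T φ(η,ζ) ρ_{uv}(η) ρ_{st}(ζ) dη dζ|
  ≤ 4 (v − u)^{2H} (t − s)^{2H} sup_{(η,ζ) ∈ [0,T]²} |φ(η,ζ)|`,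
where `ρ_{ab}(η) = H (sgn(b − η)|b − η|^{2H−1} − sgn(a − η)|a − η|^{2H−1})` (set to `0` at
`η ∈ {a, b}`). -/
theorem fbm_density_double_pairing_bound
    (H : ℝ) (hH0 : 0 < H) (hH1 : H ≤ 1 / 2)
    (T : ℝ) (hT : 0 < T)
    (φ : ℝ → ℝ → ℝ) (hφm : Measurable fun q : ℝ × ℝ => φ q.1 q.2)
    (hφb : ∃ M : ℝ, ∀ η ∈ Set.Icc (0 : ℝ) T, ∀ ζ ∈ Set.Icc (0 : ℝ) T, |φ η ζ| ≤ M)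
    (u v : ℝ) (hu : 0 ≤ u) (huv : u < v) (hv : v ≤ T)
    (s t : ℝ) (hs : 0 ≤ s) (hst : s < t) (ht : t ≤ T)
    (ρuv ρst : ℝ → ℝ)
    (hρuv : ∀ η : ℝ, 0 ≤ η → η ≠ u → η ≠ v →
      ρuv η = H * (Real.sign (v - η) * |v - η| ^ (2 * H - 1)
        - Real.sign (u - η) * |u - η| ^ (2 * H - 1)))
    (hρuvu : ρuv u = 0) (hρuvv : ρuv v = 0)
    (hρst : ∀ ζ : ℝ, 0 ≤ ζ → ζ ≠ s → ζ ≠ t →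
      ρst ζ = H * (Real.sign (t - ζ) * |t - ζ| ^ (2 * H - 1)
        - Real.sign (s - ζ) * |s - ζ| ^ (2 * H - 1)))
    (hρsts : ρst s = 0) (hρstt : ρst t = 0) :
    |∫ ζ in (0 : ℝ)..T, ∫ η in (0 : ℝ)..T, φ η ζ * ρuv η * ρst ζ|
      ≤ 4 * (v - u) ^ (2 * H) * (t - s) ^ (2 * H) *
          sSup ((fun q : ℝ × ℝ => |φ q.1 q.2|) '' (Set.Icc (0 : ℝ) T ×ˢ Set.Icc (0 : ℝ) T)) := by
  obtain ⟨M0, hM0⟩ := hφb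
  set S := sSup ((fun q : ℝ × ℝ => |φ q.1 q.2|) '' (Set.Icc (0 : ℝ) T ×ˢ Set.Icc (0 : ℝ) T))
    with hSdef
  have hbdd : BddAbove ((fun q : ℝ × ℝ => |φ q.1 q.2|) ''
      (Set.Icc (0 : ℝ) T ×ˢ Set.Icc (0 : ℝ) T)) := by
    refine ⟨M0, ?_⟩
    rintro x ⟨q, ⟨hq1, hq2⟩, rfl⟩
    exact hM0 q.1 hq1 q.2 hq2
  have hM : ∀ η ζ : ℝ, η ∈ Set.Icc (0:ℝ) T → ζ ∈ Set.Icc (0:ℝ) T → |φ η ζ| ≤ S :=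
    fun η ζ h1 h2 => le_csSup hbdd ⟨(η, ζ), ⟨h1, h2⟩, rfl⟩
  have hS0 : (0:ℝ) ≤ S :=
    le_trans (abs_nonneg _) (hM 0 0 ⟨le_refl 0, hT.le⟩ ⟨le_refl 0, hT.le⟩)
  -- abbreviations for the explicit densities
  have hp : (-1:ℝ) < 2 * H - 1 := by linarith
  have hIIuv : IntervalIntegrable (fun η : ℝ =>
      |H * (Real.sign (v - η) * |v - η| ^ (2 * H - 1)
        - Real.sign (u - η) * |u - η| ^ (2 * H - 1))|) volume 0 T :=
    (aux_f_II hH0 u v 0 T).abs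
  have hIIst : IntervalIntegrable (fun ζ : ℝ =>
      |H * (Real.sign (t - ζ) * |t - ζ| ^ (2 * H - 1)
        - Real.sign (s - ζ) * |s - ζ| ^ (2 * H - 1))|) volume 0 T :=
    (aux_f_II hH0 s t 0 T).abs
  have hIuv0 : (0:ℝ) ≤ ∫ η in (0:ℝ)..T,
      |H * (Real.sign (v - η) * |v - η| ^ (2 * H - 1)
        - Real.sign (u - η) * |u - η| ^ (2 * H - 1))| :=
    intervalIntegral.integral_nonneg hT.le fun x _ => abs_nonneg _
  have hIst0 : (0:ℝ) ≤ ∫ ζ in (0:ℝ)..T,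
      |H * (Real.sign (t - ζ) * |t - ζ| ^ (2 * H - 1)
        - Real.sign (s - ζ) * |s - ζ| ^ (2 * H - 1))| :=
    intervalIntegral.integral_nonneg hT.le fun x _ => abs_nonneg _
  have hIuvle := aux_key_bound hH0 hH1 hu huv hv
  have hIstle := aux_key_bound hH0 hH1 hs hst ht
  -- a.e. identification of ρ with the explicit formula
  have hae_uv : ∀ᵐ x ∂(volume.restrict (Set.uIoc (0:ℝ) T)),
      ρuv x = H * (Real.sign (v - x) * |v - x| ^ (2 * H - 1)
        - Real.sign (u - x) * |u - x| ^ (2 * H - 1)) := by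
    rw [Set.uIoc_of_le hT.le]
    filter_upwards [ae_restrict_mem measurableSet_Ioc,
      ae_restrict_of_ae (aux_ae_ne u), ae_restrict_of_ae (aux_ae_ne v)] with x hx h1 h2
    exact hρuv x hx.1.le h1 h2
  have hae_st : ∀ᵐ x ∂(volume.restrict (Set.uIoc (0:ℝ) T)),
      ρst x = H * (Real.sign (t - x) * |t - x| ^ (2 * H - 1)
        - Real.sign (s - x) * |s - x| ^ (2 * H - 1)) := by
    rw [Set.uIoc_of_le hT.le]
    filter_upwards [ae_restrict_mem measurableSet_Ioc,
      ae_restrict_of_ae (aux_ae_ne s), ae_restrict_of_ae (aux_ae_ne t)] with x hx h1 h2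
    exact hρst x hx.1.le h1 h2
  -- inner estimate
  have hinner : ∀ ζ : ℝ, ζ ∈ Set.Icc (0:ℝ) T →
      ‖∫ η in (0:ℝ)..T, φ η ζ * ρuv η * ρst ζ‖
        ≤ (S * |ρst ζ|) * ∫ η in (0:ℝ)..T,
            |H * (Real.sign (v - η) * |v - η| ^ (2 * H - 1)
              - Real.sign (u - η) * |u - η| ^ (2 * H - 1))| := by
    intro ζ hζ
    have hb := intervalIntegral.norm_integral_le_abs_of_norm_le (μ := volume)
      (f := fun η => φ η ζ * ρuv η * ρst ζ)
      (g := fun η => (S * |ρst ζ|) *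
        |H * (Real.sign (v - η) * |v - η| ^ (2 * H - 1)
          - Real.sign (u - η) * |u - η| ^ (2 * H - 1))|)
      ?_ (hIIuv.const_mul _)
    · refine le_trans hb ?_
      rw [intervalIntegral.integral_const_mul,
        abs_of_nonneg (mul_nonneg (mul_nonneg hS0 (abs_nonneg _)) hIuv0)]
    · filter_upwards [hae_uv, ae_restrict_mem measurableSet_uIoc] with x hxeq hxmem
      have hxIcc : x ∈ Set.Icc (0:ℝ) T := by
        rw [Set.uIoc_of_le hT.le] at hxmem
        exact Set.Ioc_subset_Icc_self hxmem
      set E := H * (Real.sign (v - x) * |v - x| ^ (2 * H - 1)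
        - Real.sign (u - x) * |u - x| ^ (2 * H - 1)) with hE
      rw [Real.norm_eq_abs, hxeq, abs_mul, abs_mul]
      have h1 : |φ x ζ| ≤ S := hM x ζ hxIcc hζ
      calc |φ x ζ| * |E| * |ρst ζ| = |φ x ζ| * (|E| * |ρst ζ|) := by ring
        _ ≤ S * (|E| * |ρst ζ|) :=
            mul_le_mul_of_nonneg_right h1 (mul_nonneg (abs_nonneg _) (abs_nonneg _))
        _ = (S * |ρst ζ|) * |E| := by ring
  -- outer estimate
  rw [← Real.norm_eq_abs]
  have houter := intervalIntegral.norm_integral_le_abs_of_norm_le (μ := volume)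
    (f := fun ζ => ∫ η in (0:ℝ)..T, φ η ζ * ρuv η * ρst ζ)
    (g := fun ζ => ((S * ∫ η in (0:ℝ)..T,
        |H * (Real.sign (v - η) * |v - η| ^ (2 * H - 1)
          - Real.sign (u - η) * |u - η| ^ (2 * H - 1))|)) *
      |H * (Real.sign (t - ζ) * |t - ζ| ^ (2 * H - 1)
        - Real.sign (s - ζ) * |s - ζ| ^ (2 * H - 1))|)
    ?_ (hIIst.const_mul _)
  · refine le_trans houter ?_
    rw [intervalIntegral.integral_const_mul,
      abs_of_nonneg (mul_nonneg (mul_nonneg hS0 hIuv0) hIst0)]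
    have h1 : (0:ℝ) ≤ (v - u) ^ (2*H) := Real.rpow_nonneg (by linarith) _
    have h2 : (0:ℝ) ≤ (t - s) ^ (2*H) := Real.rpow_nonneg (by linarith) _
    calc S * (∫ η in (0:ℝ)..T,
          |H * (Real.sign (v - η) * |v - η| ^ (2 * H - 1)
            - Real.sign (u - η) * |u - η| ^ (2 * H - 1))|) *
        ∫ ζ in (0:ℝ)..T,
          |H * (Real.sign (t - ζ) * |t - ζ| ^ (2 * H - 1)
            - Real.sign (s - ζ) * |s - ζ| ^ (2 * H - 1))|
        ≤ S * (2 * (v - u) ^ (2*H)) * (2 * (t - s) ^ (2*H)) := by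
          apply mul_le_mul
          · exact mul_le_mul_of_nonneg_left hIuvle hS0
          · exact hIstle
          · exact hIst0
          · positivity
      _ = 4 * (v - u) ^ (2 * H) * (t - s) ^ (2 * H) * S := by ring
  · filter_upwards [hae_st, ae_restrict_mem measurableSet_uIoc] with ζ hζeq hζmem
    have hζIcc : ζ ∈ Set.Icc (0:ℝ) T := by
      rw [Set.uIoc_of_le hT.le] at hζmem
      exact Set.Ioc_subset_Icc_self hζmem
    calc ‖∫ η in (0:ℝ)..T, φ η ζ * ρuv η * ρst ζ‖
        ≤ (S * |ρst ζ|) * ∫ η in (0:ℝ)..T,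
            |H * (Real.sign (v - η) * |v - η| ^ (2 * H - 1)
              - Real.sign (u - η) * |u - η| ^ (2 * H - 1))| := hinner ζ hζIcc
      _ = (S * ∫ η in (0:ℝ)..T,
            |H * (Real.sign (v - η) * |v - η| ^ (2 * H - 1)
              - Real.sign (u - η) * |u - η| ^ (2 * H - 1))|) *
          |H * (Real.sign (t - ζ) * |t - ζ| ^ (2 * H - 1)
            - Real.sign (s - ζ) * |s - ζ| ^ (2 * H - 1))| := by
          rw [hζeq]; ring
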